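/- Let X be a complete decomposition space and let v, v' be words over {0,1,a} of lengths m and n. Then the following square is a pullback of sets: top map X_{vv'} → X_2, the restriction of the map X_{m+n} → X_2 induced by the generic map [2] → [m+n] with 0 ↦ 0, 1 ↦ m, 2 ↦ m+n; right map (d_2, d_0) : X_2 → X_1 × X_1; bottom map X_v × X_{v'} → X_1 × X_1, the product of the two long-edge maps; left map X_{vv'} → X_v × X_{v'}, induced by the two free maps [m] → [m+n] (initial segment) and [n] → [m+n] (final segment). -/

import Mathlib

open CategoryTheory CategoryTheory.Limits Simplicial Opposite

/-- A map in the simplex category is *generic* if it preserves the endpoints. -/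
def IsGeneric {a b : SimplexCategory} (g : a ⟶ b) : Prop :=
  g.toOrderHom 0 = 0 ∧ g.toOrderHom (Fin.last a.len) = Fin.last b.len

/-- A map in the simplex category is *free* if it is distance preserving. -/
def IsFree {a b : SimplexCategory} (f : a ⟶ b) : Prop :=
  ∀ i : Fin (a.len + 1), (f.toOrderHom i : ℕ) = (f.toOrderHom 0 : ℕ) + (i : ℕ)

/-- A decomposition space is a simplicial set carrying every pushout in `Δ` of a
generic map `g` along a free map `f` to a pullback of sets. -/
def IsDecomposition (X : SSet) : Prop :=
  ∀ ⦃a b c d : SimplexCategory⦄ (g : a ⟶ b) (f : a ⟶ c) (h : b ⟶ d) (k : c ⟶ d),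
    IsGeneric g → IsFree f → IsPushout g f h k →
    IsPullback (X.map h.op) (X.map k.op) (X.map g.op) (X.map f.op)

/-- A simplicial set is *complete* if all degeneracy maps are injective. -/
def Complete (X : SSet) : Prop :=
  ∀ (n : ℕ) (i : Fin (n + 1)), Function.Injective (X.σ i : X _⦋n⦌ ⟶ X _⦋n + 1⦌)

/-- The free map `[1] → [n]` sending `0, 1` to `i, i+1`; it induces the map
taking the `i`-th principal edge (`0`-indexed) of an `n`-simplex. -/
def principalEdge (n : ℕ) (i : Fin n) : (⦋1⦌ : SimplexCategory) ⟶ ⦋n⦌ :=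
  SimplexCategory.mkHom
    { toFun := fun j => ⟨i.1 + j.1, by have := i.2; have := j.2; omega⟩
      monotone' := fun a b h => by
        simp only [Fin.mk_le_mk]
        exact Nat.add_le_add_left h i.1 }

/-- The unique generic map `[1] → [n]` (`0 ↦ 0`, `1 ↦ n`); it induces the map
taking the long edge of an `n`-simplex. -/
def longEdgeMap (n : ℕ) : (⦋1⦌ : SimplexCategory) ⟶ ⦋n⦌ :=
  SimplexCategory.mkHom
    { toFun := fun j => ⟨j.1 * n, by
        have h := j.2
        have : j.1 * n ≤ 1 * n := Nat.mul_le_mul_right n (by omega)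
        omega⟩
      monotone' := fun a b h => by
        simp only [Fin.mk_le_mk]
        exact Nat.mul_le_mul_right n h }

/-- The alphabet `{0, 1, a}`: `z` prescribes a degenerate principal edge, `o` an
unrestricted one, `a` a nondegenerate one. -/
inductive Letter where
  | z
  | o
  | a
  deriving DecidableEq

/-- The subset of `X₁` prescribed by a letter. -/
def edgeSet (X : SSet) (l : Letter) : Set (X _⦋1⦌) := match l with
  | .z => Set.range (X.σ (0 : Fin 1))
  | .o => Set.univ
  | .a => (Set.range (X.σ (0 : Fin 1)))ᶜ

/-- `X_w`, the set of `n`-simplices whose principal edges have the types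
prescribed by the word `w`. -/
def wordSet (X : SSet) {n : ℕ} (w : Fin n → Letter) : Set (X _⦋n⦌) :=
  {σ | ∀ i : Fin n, X.map (principalEdge n i).op σ ∈ edgeSet X (w i)}

/-- A simplex is *effective* if all its principal edges are nondegenerate. -/
def Effective (X : SSet) {n : ℕ} (σ : X _⦋n⦌) : Prop :=
  ∀ i : Fin n, X.map (principalEdge n i).op σ ∉ Set.range (X.σ (0 : Fin 1))

/-- The constant word `aa⋯a`. -/
def allA (n : ℕ) : Fin n → Letter := fun _ => Letter.a

/-- Concatenation of words. -/
def concatW {m n : ℕ} (v : Fin m → Letter) (v' : Fin n → Letter) : Fin (m + n) → Letter :=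
  fun i => if h : i.1 < m then v ⟨i.1, h⟩ else v' ⟨i.1 - m, by have := i.2; omega⟩

/-- The word `v ℓ v'` obtained by splicing a letter `ℓ` between the words `v` and `v'`. -/
def splice {m n : ℕ} (v : Fin m → Letter) (l : Letter) (v' : Fin n → Letter) :
    Fin (m + n + 1) → Letter :=
  fun i => if h : i.1 < m then v ⟨i.1, h⟩
    else if h2 : i.1 = m then l
    else v' ⟨i.1 - (m + 1), by have := i.2; omega⟩

/-- A simplex (of positive dimension) is degenerate if it is in the image of some
degeneracy map. -/
def Degen (X : SSet) {n : ℕ} (σ : X _⦋n + 1⦌) : Prop :=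
  ∃ i : Fin (n + 1), σ ∈ Set.range (X.σ i)

/-- A simplicial map is *cULF* if its naturality squares on all generic maps are
pullbacks. -/
def IsCULF {Y X : SSet} (f : Y ⟶ X) : Prop :=
  ∀ ⦃a b : SimplexCategory⦄ (g : a ⟶ b), IsGeneric g →
    IsPullback (f.app (op b)) (Y.map g.op) (X.map g.op) (f.app (op a))

/-- A simplicial map is *conservative* if its naturality squares on all degeneracy
maps are pullbacks. -/
def Conservative {Y X : SSet} (f : Y ⟶ X) : Prop :=
  ∀ (n : ℕ) (i : Fin (n + 1)),
    IsPullback (f.app (op (SimplexCategory.mk n))) (Y.σ i) (X.σ i)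
      (f.app (op (SimplexCategory.mk (n + 1))))

/-- A simplicial set is *stiff* if it carries every pushout in `Δ` of a codegeneracy
map along a free map to a pullback of sets. -/
def Stiff (X : SSet) : Prop :=
  ∀ (k : ℕ) (i : Fin (k + 1)) ⦃c d : SimplexCategory⦄
    (f : SimplexCategory.mk (k + 1) ⟶ c) (h : SimplexCategory.mk k ⟶ d) (j : c ⟶ d),
    IsFree f → IsPushout (SimplexCategory.σ i) f h j →
    IsPullback (X.map h.op) (X.map j.op) (X.map (SimplexCategory.σ i).op) (X.map f.op)

/-- The map `[0] → [n]` picking out the vertex `i`. -/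
def vertexMap (n : ℕ) (i : Fin (n + 1)) : (⦋0⦌ : SimplexCategory) ⟶ ⦋n⦌ :=
  SimplexCategory.mkHom ⟨fun _ => i, fun _ _ _ => le_refl _⟩

/-- The unique map `[n] → [0]`; it induces the iterated degeneracy `X₀ → Xₙ`. -/
def toZero (n : ℕ) : (⦋n⦌ : SimplexCategory) ⟶ ⦋0⦌ :=
  SimplexCategory.mkHom ⟨fun _ => 0, fun _ _ _ => le_refl _⟩

/-- The generic map `[2] → [m+n]` sending `0,1,2` to `0,m,m+n`. -/
def midMap (m n : ℕ) : (⦋2⦌ : SimplexCategory) ⟶ ⦋m + n⦌ :=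
  SimplexCategory.mkHom
    { toFun := fun j => ⟨if j.1 = 0 then 0 else if j.1 = 1 then m else m + n, by
        split
        · omega
        · split <;> omega⟩
      monotone' := by
        intro a b hab
        have h : a.1 ≤ b.1 := hab
        have ha := a.2
        have hb := b.2
        simp only [Fin.mk_le_mk]
        split <;> split <;> (try split) <;> (try split) <;> omega }

/-- The free map `[m] → [m+n]` onto the initial segment. -/
def freeInitial (m n : ℕ) : (⦋m⦌ : SimplexCategory) ⟶ ⦋m + n⦌ :=
  SimplexCategory.mkHom ⟨fun i => ⟨i.1, by have := i.2; omega⟩, fun a b h => h⟩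

/-- The free map `[n] → [m+n]` onto the final segment. -/
def freeFinal (m n : ℕ) : (⦋n⦌ : SimplexCategory) ⟶ ⦋m + n⦌ :=
  SimplexCategory.mkHom ⟨fun i => ⟨m + i.1, by have := i.2; omega⟩,
    fun a b h => by
      simp only [Fin.mk_le_mk]
      exact Nat.add_le_add_left h m⟩

/-- The word `1aa⋯a` (`n` letters `a`). -/
def oneA (n : ℕ) : Fin (n + 1) → Letter := fun i => if i.1 = 0 then Letter.o else Letter.a

/-- The word `0aa⋯a` (`n` letters `a`). -/
def zeroA (n : ℕ) : Fin (n + 1) → Letter := fun i => if i.1 = 0 then Letter.z else Letter.a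

/-- The word `aa⋯a1` (`n` letters `a`). -/
def aOne (n : ℕ) : Fin (n + 1) → Letter := fun i => if i.1 = n then Letter.o else Letter.a

/-- The word `aa⋯a0` (`n` letters `a`). -/
def aZero (n : ℕ) : Fin (n + 1) → Letter := fun i => if i.1 = n then Letter.z else Letter.a

/-- The number of letters `0` in a word. -/
def zcount {n : ℕ} (w : Fin n → Letter) : ℕ :=
  (Finset.univ.filter fun i => w i = Letter.z).card

/-- The surjection `[n] → [n - zcount w]` collapsing, for each position `j` with
`w j = 0`, the vertex `j+1` onto the vertex `j`; the induced map
`X_{n - zcount w} → X_n` is the iterated degeneracy `s_{j_k} ⋯ s_{j_1}` where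
`j_1 < ⋯ < j_k` are the positions of the letters `0` of `w`. -/
def collapseMap {n : ℕ} (w : Fin n → Letter) :
    (⦋n⦌ : SimplexCategory) ⟶ ⦋n - zcount w⦌ :=
  SimplexCategory.mkHom
    { toFun := fun t =>
        ⟨(Finset.univ.filter fun i : Fin n => i.1 < t.1 ∧ ¬ (w i = Letter.z)).card, by
          have h2 := Finset.card_filter_add_card_filter_not
            (s := (Finset.univ : Finset (Fin n))) (p := fun i => w i = Letter.z)
          have h1 : (Finset.univ.filter fun i : Fin n => i.1 < t.1 ∧ ¬ (w i = Letter.z)).card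
              ≤ (Finset.univ.filter fun i : Fin n => ¬ (w i = Letter.z)).card :=
            Finset.card_le_card (fun x hx => by
              simp only [Finset.mem_filter] at hx ⊢
              exact ⟨hx.1, hx.2.2⟩)
          have h3 : zcount w = (Finset.univ.filter fun i : Fin n => w i = Letter.z).card := rfl
          simp only [Finset.card_univ, Fintype.card_fin] at h2
          omega⟩
      monotone' := by
        intro a b hab
        have h : a.1 ≤ b.1 := hab
        simp only [Fin.mk_le_mk]
        exact Finset.card_le_card (fun x hx => by
          simp only [Finset.mem_filter] at hx ⊢
          exact ⟨hx.1, lt_of_lt_of_le hx.2.1 h, hx.2.2⟩) }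

/-- An edge has finite length if there is a bound on the dimensions of the effective
simplices having it as long edge. -/
def FiniteLength (X : SSet) (a : X _⦋1⦌) : Prop :=
  ∃ N : ℕ, ∀ (n : ℕ) (σ : X _⦋n⦌), Effective X σ →
    X.map (longEdgeMap n).op σ = a → n ≤ N

/-- A *tight* decomposition space: a complete decomposition space in which every edge
has finite length. -/
def Tight (X : SSet) : Prop :=
  IsDecomposition X ∧ Function.Injective (X.σ (0 : Fin 1) : X _⦋0⦌ ⟶ X _⦋1⦌) ∧
    ∀ a : X _⦋1⦌, FiniteLength X a

/-- The length of an edge: the supremum of the dimensions of effective simplices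
having it as long edge. -/
noncomputable def edgeLength (X : SSet) (a : X _⦋1⦌) : ℕ :=
  sSup (setOf fun n : ℕ => ∃ σ : X _⦋n⦌, Effective X σ ∧ X.map (longEdgeMap n).op σ = a)

/-- A complete simplicial set is *split* if all face maps preserve nondegenerate
simplices. -/
def Split (X : SSet) : Prop :=
  Complete X ∧ ∀ (n : ℕ) (i : Fin (n + 3)) (σ : X _⦋n + 2⦌),
    ¬ Degen X σ → ¬ Degen X (X.δ i σ)

/-- The counit: the indicator function of the degenerate edges. -/
noncomputable def epsFun (X : SSet) : X _⦋1⦌ → ℚ := fun f =>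
  haveI := Classical.propDecidable (f ∈ Set.range (X.σ (0 : Fin 1)))
  if f ∈ Set.range (X.σ (0 : Fin 1)) then 1 else 0

/-- Convolution product on `ℚ`-valued functions on `X₁`. -/
noncomputable def convFun (X : SSet) (φ ψ : X _⦋1⦌ → ℚ) : X _⦋1⦌ → ℚ :=
  fun f => ∑ᶠ σ ∈ (fun τ => X.δ (1 : Fin 3) τ) ⁻¹' {f},
    φ (X.δ (2 : Fin 3) σ) * ψ (X.δ (0 : Fin 3) σ)

/-- The Möbius function `Φ_even - Φ_odd`. -/
noncomputable def muFun (X : SSet) : X _⦋1⦌ → ℚ :=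
  fun f => ∑ᶠ n : ℕ, (-1 : ℚ) ^ n *
    (Nat.card {σ : X.obj (op (SimplexCategory.mk n)) // Effective X σ ∧ X.map (longEdgeMap n).op σ = f} : ℚ)

/-- The category `Δ_inj`: objects those of the simplex category, morphisms the
injective monotone maps. -/
structure DeltaInj : Type where
  /-- the underlying object of the simplex category -/
  obj : SimplexCategory

instance : Category DeltaInj where
  Hom a b := {f : a.obj ⟶ b.obj // Function.Injective f.toOrderHom}
  id a := ⟨𝟙 a.obj, by
    rw [SimplexCategory.id_toOrderHom]
    exact fun x y h => h⟩
  comp f g := ⟨f.1 ≫ g.1, by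
    rw [SimplexCategory.comp_toOrderHom]
    exact fun x y h => f.2 (g.2 h)⟩
  id_comp f := by apply Subtype.ext; simp
  comp_id f := by apply Subtype.ext; simp
  assoc f g h := by apply Subtype.ext; simp

/-- The inclusion functor `Δ_inj ⊆ Δ`. -/
def DeltaInj.incl : DeltaInj ⥤ SimplexCategory where
  obj a := a.obj
  map f := f.1

/-- A *semi-decomposition space*: a semi-simplicial set carrying every pushout in
`Δ_inj` of a generic (inner) face map along a free (outer) face map to a pullback. -/
def IsSemiDecomposition (Z : DeltaInjᵒᵖ ⥤ Type) : Prop :=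
  ∀ ⦃a b c d : DeltaInj⦄ (g : a ⟶ b) (f : a ⟶ c) (h : b ⟶ d) (k : c ⟶ d),
    IsGeneric g.1 → IsFree f.1 → IsPushout g f h k →
    IsPullback (Z.map h.op) (Z.map k.op) (Z.map g.op) (Z.map f.op)

/-- A map of semi-simplicial sets is *ULF* if its naturality squares on all generic
face maps are pullbacks. -/
def IsULF {Z W : DeltaInjᵒᵖ ⥤ Type} (φ : Z ⟶ W) : Prop :=
  ∀ ⦃a b : DeltaInj⦄ (g : a ⟶ b), IsGeneric g.1 →
    IsPullback (φ.app (op b)) (Z.map g.op) (W.map g.op) (φ.app (op a))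

lemma conservative_id (X : SSet) : Conservative (𝟙 X) := by
  intro n i
  exact IsPullback.of_horiz_isIso ⟨by simp⟩

lemma conservative_comp {X Y Z : SSet} {f : X ⟶ Y} {g : Y ⟶ Z}
    (hf : Conservative f) (hg : Conservative g) : Conservative (f ≫ g) := by
  intro n i
  simpa using IsPullback.paste_horiz (hf n i) (hg n i)

lemma isCULF_id (X : SSet) : IsCULF (𝟙 X) := by
  intro a b gm hgm
  exact IsPullback.of_horiz_isIso ⟨by simp⟩

lemma isCULF_comp {X Y Z : SSet} {f : X ⟶ Y} {g : Y ⟶ Z}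
    (hf : IsCULF f) (hg : IsCULF g) : IsCULF (f ≫ g) := by
  intro a b gm hgm
  simpa using IsPullback.paste_horiz (hf gm hgm) (hg gm hgm)

lemma isULF_id (Z : DeltaInjᵒᵖ ⥤ Type) : IsULF (𝟙 Z) := by
  intro a b gm hgm
  exact IsPullback.of_horiz_isIso ⟨by simp⟩

lemma isULF_comp {X Y Z : DeltaInjᵒᵖ ⥤ Type} {f : X ⟶ Y} {g : Y ⟶ Z}
    (hf : IsULF f) (hg : IsULF g) : IsULF (f ≫ g) := by
  intro a b gm hgm
  simpa using IsPullback.paste_horiz (hf gm hgm) (hg gm hgm)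

/-- The category of split simplicial sets and conservative maps. -/
structure SplitSSet : Type 1 where
  /-- the underlying simplicial set -/
  X : SSet.{0}
  split : Split X

instance : Category SplitSSet where
  Hom A B := {f : A.X ⟶ B.X // Conservative f}
  id A := ⟨𝟙 A.X, conservative_id A.X⟩
  comp f g := ⟨f.1 ≫ g.1, conservative_comp f.2 g.2⟩
  id_comp f := by apply Subtype.ext; simp
  comp_id f := by apply Subtype.ext; simp
  assoc f g h := by apply Subtype.ext; simp

/-- The forgetful functor from split simplicial sets to simplicial sets. -/
def SplitSSet.forget : SplitSSet ⥤ SSet where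
  obj A := A.X
  map f := f.1

/-- The category of split decomposition spaces and cULF maps. -/
structure SplitDecomp : Type 1 where
  /-- the underlying simplicial set -/
  X : SSet.{0}
  split : Split X
  decomp : IsDecomposition X

instance : Category SplitDecomp where
  Hom A B := {f : A.X ⟶ B.X // IsCULF f}
  id A := ⟨𝟙 A.X, isCULF_id A.X⟩
  comp f g := ⟨f.1 ≫ g.1, isCULF_comp f.2 g.2⟩
  id_comp f := by apply Subtype.ext; simp
  comp_id f := by apply Subtype.ext; simp
  assoc f g h := by apply Subtype.ext; simp

/-- The forgetful functor from split decomposition spaces to simplicial sets. -/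
def SplitDecomp.forget : SplitDecomp ⥤ SSet where
  obj A := A.X
  map f := f.1

/-- The category of semi-decomposition spaces and ULF maps. -/
structure SemiDecomp : Type 1 where
  /-- the underlying semi-simplicial set -/
  Z : DeltaInjᵒᵖ ⥤ Type
  semidecomp : IsSemiDecomposition Z

instance : Category SemiDecomp where
  Hom A B := {φ : A.Z ⟶ B.Z // IsULF φ}
  id A := ⟨𝟙 A.Z, isULF_id A.Z⟩
  comp f g := ⟨f.1 ≫ g.1, isULF_comp f.2 g.2⟩
  id_comp f := by apply Subtype.ext; simp
  comp_id f := by apply Subtype.ext; simp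
  assoc f g h := by apply Subtype.ext; simp

/-- The forgetful functor from semi-decomposition spaces to semi-simplicial sets. -/
def SemiDecomp.forget : SemiDecomp ⥤ (DeltaInjᵒᵖ ⥤ Type) where
  obj A := A.Z
  map f := f.1

section Statement6Aux

universe u

lemma s6_pb_elem {P A B C : Type u} {fst : P ⟶ A} {snd : P ⟶ B} {f : A ⟶ C} {g : B ⟶ C}
    (h : IsPullback fst snd f g) {a : A} {b : B} (hab : f a = g b) :
    ∃! p : P, fst p = a ∧ snd p = b := by
  obtain ⟨p, hp1, hp2⟩ := Types.exists_of_isPullback h a b hab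
  exact ⟨p, ⟨hp1, hp2⟩, fun q hq =>
    Types.ext_of_isPullback h (hq.1.trans hp1.symm) (hq.2.trans hp2.symm)⟩

lemma s6_d2val : ∀ j : Fin 2, (SimplexCategory.δ (2 : Fin 3)).toOrderHom j
    = ⟨j.1, by have := j.2; simp only [SimplexCategory.len_mk]; omega⟩ := by decide

lemma s6_d0val : ∀ j : Fin 2, (SimplexCategory.δ (0 : Fin 3)).toOrderHom j
    = ⟨j.1 + 1, by have := j.2; simp only [SimplexCategory.len_mk]; omega⟩ := by decide

/-- The generic map `[2] ⟶ [m+1]`: `0,1,2 ↦ 0,m,m+1`. -/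
def s6kB (m : ℕ) : (⦋2⦌ : SimplexCategory) ⟶ ⦋m + 1⦌ :=
  SimplexCategory.mkHom
    { toFun := fun j => ⟨if j.1 = 0 then 0 else if j.1 = 1 then m else m + 1, by
        split
        · omega
        · split <;> omega⟩
      monotone' := by
        intro a b hab
        have h : a.1 ≤ b.1 := hab
        simp only [Fin.mk_le_mk]
        split <;> split <;> (try split) <;> (try split) <;> omega }

/-- The generic map `[m+1] ⟶ [m+n]`: identity up to `m`, `m+1 ↦ m+n`. -/
def s6kA (m n : ℕ) : (⦋m + 1⦌ : SimplexCategory) ⟶ ⦋m + n⦌ :=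
  SimplexCategory.mkHom
    { toFun := fun j => ⟨if j.1 ≤ m then j.1 else m + n, by split <;> omega⟩
      monotone' := by
        intro a b hab
        have h : a.1 ≤ b.1 := hab
        simp only [Fin.mk_le_mk]
        split <;> split <;> omega }

lemma s6_squareB (m : ℕ) :
    longEdgeMap m ≫ freeInitial m 1 = SimplexCategory.δ (2 : Fin 3) ≫ s6kB m := by
  apply SimplexCategory.Hom.ext
  apply OrderHom.ext
  funext j
  show (freeInitial m 1).toOrderHom ((longEdgeMap m).toOrderHom j)
    = (s6kB m).toOrderHom ((SimplexCategory.δ (2 : Fin 3)).toOrderHom j)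
  rw [s6_d2val]
  have e1 : ((freeInitial m 1).toOrderHom ((longEdgeMap m).toOrderHom j) : ℕ) = j.1 * m := rfl
  have e2 : ∀ k, ((s6kB m).toOrderHom k : ℕ)
      = if k.1 = 0 then 0 else if k.1 = 1 then m else m + 1 := fun _ => rfl
  apply Fin.ext
  rw [e1, e2]
  fin_cases j <;> simp

lemma s6_squareA (m n : ℕ) :
    longEdgeMap n ≫ freeFinal m n = freeFinal m 1 ≫ s6kA m n := by
  apply SimplexCategory.Hom.ext
  apply OrderHom.ext
  funext j
  show (freeFinal m n).toOrderHom ((longEdgeMap n).toOrderHom j)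
    = (s6kA m n).toOrderHom ((freeFinal m 1).toOrderHom j)
  have e1 : ((freeFinal m n).toOrderHom ((longEdgeMap n).toOrderHom j) : ℕ) = m + j.1 * n := rfl
  have e2 : ((s6kA m n).toOrderHom ((freeFinal m 1).toOrderHom j) : ℕ)
      = if m + j.1 ≤ m then m + j.1 else m + n := rfl
  apply Fin.ext
  rw [e1, e2]
  fin_cases j <;> simp

end Statement6Aux

section S6Pushouts

lemma s6_comp_app {a b c : SimplexCategory} (f : a ⟶ b) (g : b ⟶ c) (i : Fin (a.len + 1)) :
    (f ≫ g).toOrderHom i = g.toOrderHom (f.toOrderHom i) := rfl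

lemma s6_freeInitial_app (m n : ℕ) (i : Fin ((SimplexCategory.mk m).len + 1)) :
    (freeInitial m n).toOrderHom i
      = ⟨i.1, by have := i.2; simp only [SimplexCategory.len_mk] at this ⊢; omega⟩ := rfl

lemma s6_freeFinal_app (m n : ℕ) (i : Fin ((SimplexCategory.mk n).len + 1)) :
    (freeFinal m n).toOrderHom i
      = ⟨m + i.1, by have := i.2; simp only [SimplexCategory.len_mk] at this ⊢; omega⟩ := rfl

lemma s6_longEdge_app (k : ℕ) (j : Fin ((SimplexCategory.mk 1).len + 1)) :
    (longEdgeMap k).toOrderHom j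
      = ⟨j.1 * k, by
          have := j.2; simp only [SimplexCategory.len_mk] at this ⊢
          have : j.1 * k ≤ 1 * k := Nat.mul_le_mul_right k (by omega)
          omega⟩ := rfl

lemma s6_kB_app (m : ℕ) (i : Fin ((SimplexCategory.mk 2).len + 1)) :
    (s6kB m).toOrderHom i
      = ⟨if i.1 = 0 then 0 else if i.1 = 1 then m else m + 1, by
          simp only [SimplexCategory.len_mk]; split <;> (try split) <;> omega⟩ := rfl

lemma s6_kA_app (m n : ℕ) (i : Fin ((SimplexCategory.mk (m + 1)).len + 1)) :
    (s6kA m n).toOrderHom i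
      = ⟨if i.1 ≤ m then i.1 else m + n, by
          have := i.2; simp only [SimplexCategory.len_mk] at this ⊢; split <;> omega⟩ := rfl

/-- The descent map for the pushout `[m+1] = [m] ∪_{[1]} [2]`. -/
def s6descB (m : ℕ) (s : PushoutCocone (longEdgeMap m) (SimplexCategory.δ (2 : Fin 3))) :
    (⦋m + 1⦌ : SimplexCategory) ⟶ s.pt :=
  SimplexCategory.Hom.mk
    { toFun := fun i =>
        if h : i.1 ≤ m then
          s.inl.toOrderHom ⟨i.1, by simp only [SimplexCategory.len_mk]; omega⟩
        else s.inr.toOrderHom ⟨2, by simp only [SimplexCategory.len_mk]; omega⟩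
      monotone' := by
        have hc : ∀ j, s.inl.toOrderHom ((longEdgeMap m).toOrderHom j)
            = s.inr.toOrderHom ((SimplexCategory.δ (2 : Fin 3)).toOrderHom j) :=
          fun j => congrArg (fun f => f.toOrderHom j) s.condition
        have key : s.inl.toOrderHom ⟨m, by simp only [SimplexCategory.len_mk]; omega⟩
            = s.inr.toOrderHom ⟨1, by simp only [SimplexCategory.len_mk]; omega⟩ := by
          have h := hc 1
          rw [s6_longEdge_app, s6_d2val] at h
          refine (Eq.trans ?_ h).trans ?_
          · exact congrArg _ (Fin.ext (by simp))
          · exact congrArg _ (Fin.ext (by simp))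
        intro a b hab
        have hab' : a.1 ≤ b.1 := hab
        dsimp only
        by_cases ha : a.1 ≤ m <;> by_cases hb : b.1 ≤ m
        · rw [dif_pos ha, dif_pos hb]
          exact s.inl.toOrderHom.monotone (Fin.mk_le_mk.2 hab')
        · rw [dif_pos ha, dif_neg hb]
          calc s.inl.toOrderHom ⟨a.1, _⟩
              ≤ s.inl.toOrderHom ⟨m, by simp only [SimplexCategory.len_mk]; omega⟩ :=
                s.inl.toOrderHom.monotone (Fin.mk_le_mk.2 ha)
            _ = s.inr.toOrderHom ⟨1, by simp only [SimplexCategory.len_mk]; omega⟩ := key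
            _ ≤ s.inr.toOrderHom ⟨2, _⟩ :=
                s.inr.toOrderHom.monotone (Fin.mk_le_mk.2 (by omega))
        · omega
        · rw [dif_neg ha, dif_neg hb] }

lemma s6descB_app (m : ℕ) (s : PushoutCocone (longEdgeMap m) (SimplexCategory.δ (2 : Fin 3)))
    (i : Fin ((SimplexCategory.mk (m + 1)).len + 1)) :
    (s6descB m s).toOrderHom i
      = if h : i.1 ≤ m then
          s.inl.toOrderHom ⟨i.1, by simp only [SimplexCategory.len_mk]; omega⟩
        else s.inr.toOrderHom ⟨2, by simp only [SimplexCategory.len_mk]; omega⟩ := by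
  rfl

lemma s6_pushoutB (m : ℕ) :
    IsPushout (longEdgeMap m) (SimplexCategory.δ (2 : Fin 3)) (freeInitial m 1) (s6kB m) := by
  apply IsPushout.of_isColimit
    (c := PushoutCocone.mk (freeInitial m 1) (s6kB m) (s6_squareB m))
  apply PushoutCocone.IsColimit.mk (s6_squareB m) (fun s => s6descB m s) ?_ ?_ ?_
  · -- fac_left
    intro s
    apply SimplexCategory.Hom.ext
    apply OrderHom.ext
    funext i
    rw [s6_comp_app, s6_freeInitial_app, s6descB_app]
    have hi : i.1 ≤ m := by have := i.2; simp only [SimplexCategory.len_mk] at this; omega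
    rw [dif_pos hi]
  · -- fac_right
    intro s
    have hc : ∀ j, s.inl.toOrderHom ((longEdgeMap m).toOrderHom j)
        = s.inr.toOrderHom ((SimplexCategory.δ (2 : Fin 3)).toOrderHom j) :=
      fun j => congrArg (fun f => f.toOrderHom j) s.condition
    apply SimplexCategory.Hom.ext
    apply OrderHom.ext
    funext i
    rw [s6_comp_app, s6_kB_app, s6descB_app]
    fin_cases i
    · rw [dif_pos (by simp)]
      have h := hc 0
      rw [s6_longEdge_app, s6_d2val] at h
      refine (Eq.trans ?_ h).trans ?_
      · exact congrArg _ (Fin.ext (by simp))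
      · exact congrArg _ (Fin.ext (by simp))
    · rw [dif_pos (by simp)]
      have h := hc 1
      rw [s6_longEdge_app, s6_d2val] at h
      refine (Eq.trans ?_ h).trans ?_
      · exact congrArg _ (Fin.ext (by simp))
      · exact congrArg _ (Fin.ext (by simp))
    · rw [dif_neg (by simp)]
  · -- uniq
    intro s t hl hr
    apply SimplexCategory.Hom.ext
    apply OrderHom.ext
    funext i
    have hi2 : i.1 < m + 2 := by have := i.2; simp only [SimplexCategory.len_mk] at this; omega
    rw [s6descB_app]
    by_cases hi : i.1 ≤ m
    · rw [dif_pos hi]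
      have h := congrArg (fun f => f.toOrderHom
        (⟨i.1, by simp only [SimplexCategory.len_mk]; omega⟩ : Fin ((SimplexCategory.mk m).len + 1))) hl
      simp only at h
      rw [s6_comp_app, s6_freeInitial_app] at h
      refine Eq.trans ?_ h
      exact congrArg _ (Fin.ext rfl)
    · rw [dif_neg hi]
      have h := congrArg (fun f => f.toOrderHom
        (⟨2, by simp only [SimplexCategory.len_mk]; omega⟩ : Fin ((SimplexCategory.mk 2).len + 1))) hr
      simp only at h
      rw [s6_comp_app, s6_kB_app] at h
      refine Eq.trans ?_ h
      exact congrArg _ (Fin.ext (by simp [s6_kB_app]; omega))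

/-- The descent map for the pushout `[m+n] = [m+1] ∪_{[1]} [n]`. -/
def s6descA (m n : ℕ) (s : PushoutCocone (longEdgeMap n) (freeFinal m 1)) :
    (⦋m + n⦌ : SimplexCategory) ⟶ s.pt :=
  SimplexCategory.Hom.mk
    { toFun := fun i =>
        if h : i.1 ≤ m then
          s.inr.toOrderHom ⟨i.1, by simp only [SimplexCategory.len_mk]; omega⟩
        else s.inl.toOrderHom ⟨i.1 - m, by
          have := i.2; simp only [SimplexCategory.len_mk] at this ⊢; omega⟩
      monotone' := by
        have hc : ∀ j, s.inl.toOrderHom ((longEdgeMap n).toOrderHom j)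
            = s.inr.toOrderHom ((freeFinal m 1).toOrderHom j) :=
          fun j => congrArg (fun f => f.toOrderHom j) s.condition
        have key : s.inl.toOrderHom ⟨0, by simp only [SimplexCategory.len_mk]; omega⟩
            = s.inr.toOrderHom ⟨m, by simp only [SimplexCategory.len_mk]; omega⟩ := by
          have h := hc 0
          rw [s6_longEdge_app, s6_freeFinal_app] at h
          refine (Eq.trans ?_ h).trans ?_
          · exact congrArg _ (Fin.ext (by simp))
          · exact congrArg _ (Fin.ext (by simp))
        intro a b hab
        have hab' : a.1 ≤ b.1 := hab
        dsimp only
        by_cases ha : a.1 ≤ m <;> by_cases hb : b.1 ≤ m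
        · rw [dif_pos ha, dif_pos hb]
          exact s.inr.toOrderHom.monotone (Fin.mk_le_mk.2 hab')
        · rw [dif_pos ha, dif_neg hb]
          calc s.inr.toOrderHom ⟨a.1, _⟩
              ≤ s.inr.toOrderHom ⟨m, by simp only [SimplexCategory.len_mk]; omega⟩ :=
                s.inr.toOrderHom.monotone (Fin.mk_le_mk.2 ha)
            _ = s.inl.toOrderHom ⟨0, by simp only [SimplexCategory.len_mk]; omega⟩ := key.symm
            _ ≤ s.inl.toOrderHom ⟨b.1 - m, _⟩ :=
                s.inl.toOrderHom.monotone (Fin.mk_le_mk.2 (by omega))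
        · omega
        · rw [dif_neg ha, dif_neg hb]
          exact s.inl.toOrderHom.monotone (Fin.mk_le_mk.2 (by omega)) }

lemma s6descA_app (m n : ℕ) (s : PushoutCocone (longEdgeMap n) (freeFinal m 1))
    (i : Fin ((SimplexCategory.mk (m + n)).len + 1)) :
    (s6descA m n s).toOrderHom i
      = if h : i.1 ≤ m then
          s.inr.toOrderHom ⟨i.1, by simp only [SimplexCategory.len_mk]; omega⟩
        else s.inl.toOrderHom ⟨i.1 - m, by
          have := i.2; simp only [SimplexCategory.len_mk] at this ⊢; omega⟩ := by
  rfl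

lemma s6_pushoutA (m n : ℕ) :
    IsPushout (longEdgeMap n) (freeFinal m 1) (freeFinal m n) (s6kA m n) := by
  apply IsPushout.of_isColimit
    (c := PushoutCocone.mk (freeFinal m n) (s6kA m n) (s6_squareA m n))
  apply PushoutCocone.IsColimit.mk (s6_squareA m n) (fun s => s6descA m n s) ?_ ?_ ?_
  · -- fac_left : freeFinal m n ≫ desc = s.inl
    intro s
    have hc : ∀ j, s.inl.toOrderHom ((longEdgeMap n).toOrderHom j)
        = s.inr.toOrderHom ((freeFinal m 1).toOrderHom j) :=
      fun j => congrArg (fun f => f.toOrderHom j) s.condition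
    apply SimplexCategory.Hom.ext
    apply OrderHom.ext
    funext i
    rw [s6_comp_app, s6_freeFinal_app, s6descA_app]
    by_cases hi : i.1 = 0
    · rw [dif_pos (by simp only [Fin.val_mk]; omega)]
      have h := hc 0
      rw [s6_longEdge_app, s6_freeFinal_app] at h
      refine (Eq.trans ?_ h.symm).trans ?_
      · exact congrArg _ (Fin.ext (by simp only [Fin.val_mk]; rw [hi]; rfl))
      · exact congrArg _ (Fin.ext (by simp; omega))
    · rw [dif_neg (by simp only [Fin.val_mk]; omega)]
      exact congrArg _ (Fin.ext (by simp))
  · -- fac_right : s6kA m n ≫ desc = s.inr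
    intro s
    have hc : ∀ j, s.inl.toOrderHom ((longEdgeMap n).toOrderHom j)
        = s.inr.toOrderHom ((freeFinal m 1).toOrderHom j) :=
      fun j => congrArg (fun f => f.toOrderHom j) s.condition
    apply SimplexCategory.Hom.ext
    apply OrderHom.ext
    funext i
    rw [s6_comp_app, s6_kA_app, s6descA_app]
    have hi2 : i.1 < m + 2 := by
      have := i.2; simp only [SimplexCategory.len_mk] at this; omega
    by_cases hi : i.1 ≤ m
    · rw [dif_pos (by simp only [Fin.val_mk, if_pos hi]; exact hi)]
      refine congrArg _ (Fin.ext ?_)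
      simp only [if_pos hi]
    · -- i.1 = m + 1
      by_cases hn : n = 0
      · rw [dif_pos (by simp only [Fin.val_mk, if_neg hi]; omega)]
        have h0 := hc 0
        have h1 := hc 1
        rw [s6_longEdge_app, s6_freeFinal_app] at h0 h1
        have e : s.inr.toOrderHom ⟨m + (0:Fin 2).1, by
            simp only [SimplexCategory.len_mk]; omega⟩
            = s.inr.toOrderHom ⟨m + (1:Fin 2).1, by
            simp only [SimplexCategory.len_mk]; omega⟩ := by
          rw [← h0, ← h1]
          exact congrArg _ (Fin.ext (by simp [hn]))
        refine (Eq.trans ?_ e).trans ?_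
        · exact congrArg _ (Fin.ext (by simp only [Fin.val_mk, if_neg hi]; simp [hn]; try omega))
        · exact congrArg _ (Fin.ext (by simp; omega))
      · rw [dif_neg (by simp only [Fin.val_mk, if_neg hi]; omega)]
        have h1 := hc 1
        rw [s6_longEdge_app, s6_freeFinal_app] at h1
        refine (Eq.trans ?_ h1).trans ?_
        · exact congrArg _ (Fin.ext (by simp only [Fin.val_mk, if_neg hi]; simp; try omega))
        · exact congrArg _ (Fin.ext (by simp; omega))
  · -- uniq
    intro s t hl hr
    apply SimplexCategory.Hom.ext
    apply OrderHom.ext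
    funext i
    have hi2 : i.1 < m + n + 1 := by
      have := i.2; simp only [SimplexCategory.len_mk] at this; omega
    rw [s6descA_app]
    by_cases hi : i.1 ≤ m
    · rw [dif_pos hi]
      have h := congrArg (fun f => f.toOrderHom
        (⟨i.1, by simp only [SimplexCategory.len_mk]; omega⟩ :
          Fin ((SimplexCategory.mk (m + 1)).len + 1))) hr
      simp only at h
      rw [s6_comp_app, s6_kA_app] at h
      refine Eq.trans ?_ h
      exact congrArg _ (Fin.ext (by simp [hi]))
    · rw [dif_neg hi]
      have h := congrArg (fun f => f.toOrderHom
        (⟨i.1 - m, by simp only [SimplexCategory.len_mk]; omega⟩ :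
          Fin ((SimplexCategory.mk n).len + 1))) hl
      simp only at h
      rw [s6_comp_app, s6_freeFinal_app] at h
      refine Eq.trans ?_ h
      exact congrArg _ (Fin.ext (by simp; omega))

end S6Pushouts

section S6Identities

lemma s6_isGeneric_longEdge (k : ℕ) : IsGeneric (longEdgeMap k) := by
  constructor
  · apply Fin.ext
    rw [s6_longEdge_app]
    simp
  · apply Fin.ext
    rw [s6_longEdge_app]
    simp [Fin.last, SimplexCategory.len_mk]

lemma s6_isFree_d2 : IsFree (SimplexCategory.δ (2 : Fin 3)) := by
  intro i
  rw [s6_d2val, s6_d2val]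
  simp

lemma s6_isFree_freeFinal (m n : ℕ) : IsFree (freeFinal m n) := by
  intro i
  rw [s6_freeFinal_app, s6_freeFinal_app]
  simp

lemma s6_I3 (m n : ℕ) : midMap m n = s6kB m ≫ s6kA m n := by
  apply SimplexCategory.Hom.ext
  apply OrderHom.ext
  funext i
  rw [s6_comp_app, s6_kB_app, s6_kA_app]
  fin_cases i <;> (apply Fin.ext; simp [midMap, SimplexCategory.mkHom]) <;> omega

lemma s6_I4 (m n : ℕ) : freeInitial m n = freeInitial m 1 ≫ s6kA m n := by
  apply SimplexCategory.Hom.ext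
  apply OrderHom.ext
  funext i
  rw [s6_comp_app, s6_freeInitial_app, s6_freeInitial_app, s6_kA_app]
  have hi : i.1 ≤ m := by have := i.2; simp only [SimplexCategory.len_mk] at this; omega
  apply Fin.ext
  simp [hi]

lemma s6_I7 (m : ℕ) : freeFinal m 1 = SimplexCategory.δ (0 : Fin 3) ≫ s6kB m := by
  apply SimplexCategory.Hom.ext
  apply OrderHom.ext
  funext i
  rw [s6_comp_app, s6_d0val, s6_freeFinal_app, s6_kB_app]
  fin_cases i <;> (apply Fin.ext; simp)

lemma s6_I8a (m n : ℕ) (i : Fin (m + n)) (h : i.1 < m) :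
    principalEdge (m + n) i = principalEdge m ⟨i.1, h⟩ ≫ freeInitial m n := by
  apply SimplexCategory.Hom.ext
  apply OrderHom.ext
  funext j
  rw [s6_comp_app, s6_freeInitial_app]
  apply Fin.ext
  simp [principalEdge, SimplexCategory.mkHom]
  rfl

lemma s6_I8b (m n : ℕ) (i : Fin (m + n)) (h : m ≤ i.1) :
    principalEdge (m + n) i
      = principalEdge n ⟨i.1 - m, by have := i.2; omega⟩ ≫ freeFinal m n := by
  apply SimplexCategory.Hom.ext
  apply OrderHom.ext
  funext j
  rw [s6_comp_app, s6_freeFinal_app]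
  apply Fin.ext
  show i.1 + j.1 = m + (i.1 - m + j.1)
  omega

lemma s6_map_comp (X : SSet) {a b c : SimplexCategory} (f : a ⟶ b) (g : b ⟶ c)
    (x : X.obj (op c)) : X.map f.op (X.map g.op x) = X.map (f ≫ g).op x := by
  rw [op_comp, FunctorToTypes.map_comp_apply]

lemma s6_mem_wordSet_concat (X : SSet) {m n : ℕ} (v : Fin m → Letter) (v' : Fin n → Letter)
    (σ : X.obj (op (SimplexCategory.mk (m + n)))) :
    σ ∈ wordSet X (concatW v v') ↔
      X.map (freeInitial m n).op σ ∈ wordSet X v ∧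
      X.map (freeFinal m n).op σ ∈ wordSet X v' := by
  constructor
  · intro h
    constructor
    · intro i
      have h2 := h ⟨i.1, by omega⟩
      rw [concatW] at h2
      rw [dif_pos (show (⟨i.1, by omega⟩ : Fin (m + n)).1 < m from i.2)] at h2
      rw [s6_I8a m n ⟨i.1, by omega⟩ i.2] at h2
      rw [← s6_map_comp] at h2
      simpa using h2
    · intro i
      have h2 := h ⟨m + i.1, by omega⟩
      rw [concatW] at h2
      rw [dif_neg (show ¬ (⟨m + i.1, by omega⟩ : Fin (m + n)).1 < m by simp)] at h2
      rw [s6_I8b m n ⟨m + i.1, by omega⟩ (by simp)] at h2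
      rw [← s6_map_comp] at h2
      have e1 : (⟨(⟨m + i.1, by omega⟩ : Fin (m + n)).1 - m, by have := i.2; simp only [Fin.val_mk]; omega⟩ : Fin n) = i :=
        Fin.ext (by simp)
      rw [e1] at h2
      exact h2
  · intro ⟨h1, h2⟩ i
    rw [concatW]
    by_cases hi : i.1 < m
    · rw [dif_pos hi, s6_I8a m n i hi, ← s6_map_comp]
      exact h1 ⟨i.1, hi⟩
    · rw [dif_neg hi, s6_I8b m n i (by omega), ← s6_map_comp]
      exact h2 ⟨i.1 - m, by have := i.2; omega⟩

end S6Identities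


theorem statement6 (X : SSet) (hX : IsDecomposition X)
    (hc : Function.Injective (X.σ (0 : Fin 1) : X _⦋0⦌ ⟶ X _⦋1⦌))
    (m n : ℕ) (v : Fin m → Letter) (v' : Fin n → Letter) :
    (∀ σ ∈ wordSet X (concatW v v'),
      X.map (freeInitial m n).op σ ∈ wordSet X v ∧
      X.map (freeFinal m n).op σ ∈ wordSet X v' ∧
      X.δ (2 : Fin 3) (X.map (midMap m n).op σ)
        = X.map (longEdgeMap m).op (X.map (freeInitial m n).op σ) ∧
      X.δ (0 : Fin 3) (X.map (midMap m n).op σ)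
        = X.map (longEdgeMap n).op (X.map (freeFinal m n).op σ)) ∧
    (∀ (τ : X _⦋2⦌) (ρ : X _⦋m⦌) (ρ' : X _⦋n⦌),
      ρ ∈ wordSet X v → ρ' ∈ wordSet X v' →
      X.δ (2 : Fin 3) τ = X.map (longEdgeMap m).op ρ →
      X.δ (0 : Fin 3) τ = X.map (longEdgeMap n).op ρ' →
      ∃! σ : X _⦋m + n⦌, σ ∈ wordSet X (concatW v v') ∧
        X.map (midMap m n).op σ = τ ∧
        X.map (freeInitial m n).op σ = ρ ∧ X.map (freeFinal m n).op σ = ρ') := by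
  have pbB : IsPullback (X.map (freeInitial m 1).op) (X.map (s6kB m).op)
      (X.map (longEdgeMap m).op) (X.map (SimplexCategory.δ (2 : Fin 3)).op) :=
    hX _ _ _ _ (s6_isGeneric_longEdge m) s6_isFree_d2 (s6_pushoutB m)
  have pbA : IsPullback (X.map (freeFinal m n).op) (X.map (s6kA m n).op)
      (X.map (longEdgeMap n).op) (X.map (freeFinal m 1).op) :=
    hX _ _ _ _ (s6_isGeneric_longEdge n) (s6_isFree_freeFinal m 1) (s6_pushoutA m n)
  constructor
  · intro σ hσ
    obtain ⟨h1, h2⟩ := (s6_mem_wordSet_concat X v v' σ).1 hσ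
    refine ⟨h1, h2, ?_, ?_⟩
    · show X.map (SimplexCategory.δ (2 : Fin 3)).op (X.map (midMap m n).op σ) = _
      have I1 : SimplexCategory.δ (2 : Fin 3) ≫ midMap m n
          = longEdgeMap m ≫ freeInitial m n := by
        rw [s6_I3, ← Category.assoc, ← s6_squareB, Category.assoc, ← s6_I4]
      rw [s6_map_comp, s6_map_comp, I1]
    · show X.map (SimplexCategory.δ (0 : Fin 3)).op (X.map (midMap m n).op σ) = _
      have I2 : SimplexCategory.δ (0 : Fin 3) ≫ midMap m n
          = longEdgeMap n ≫ freeFinal m n := by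
        rw [s6_I3, ← Category.assoc, ← s6_I7, ← s6_squareA]
      rw [s6_map_comp, s6_map_comp, I2]
  · intro τ ρ ρ' hρ hρ' h2 h0
    have e2 : X.map (longEdgeMap m).op ρ = X.map (SimplexCategory.δ (2 : Fin 3)).op τ := by
      rw [← h2]; rfl
    obtain ⟨π, ⟨hπ1, hπ2⟩, hπu⟩ := s6_pb_elem pbB e2
    have e0 : X.map (longEdgeMap n).op ρ' = X.map (freeFinal m 1).op π := by
      have : X.map (freeFinal m 1).op π = X.δ (0 : Fin 3) τ := by
        rw [s6_I7 m, ← s6_map_comp, hπ2]; rfl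
      rw [this, h0]
    obtain ⟨σ, ⟨hσ1, hσ2⟩, hσu⟩ := s6_pb_elem pbA e0
    have hinit : X.map (freeInitial m n).op σ = ρ := by
      rw [s6_I4 m n, ← s6_map_comp, hσ2, hπ1]
    have hmid : X.map (midMap m n).op σ = τ := by
      rw [s6_I3 m n, ← s6_map_comp, hσ2, hπ2]
    refine ⟨σ, ⟨(s6_mem_wordSet_concat X v v' σ).2 ⟨hinit ▸ hρ, hσ1 ▸ hρ'⟩, hmid, hinit, hσ1⟩, ?_⟩
    intro σ' ⟨hw', hm', hi', hf'⟩
    have hπ' : X.map (s6kA m n).op σ' = π := by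
      apply hπu
      constructor
      · rw [s6_map_comp, ← s6_I4, hi']
      · rw [s6_map_comp, ← s6_I3, hm']
    exact hσu σ' ⟨hf', hπ'⟩
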